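/- For every 0 ≤ d ≤ n−3, the number of critical cubes of Ω_n of dimension d equals the binomial coefficient C(n,d). -/

import Mathlib

/-- A (potential) cube of the cubical complex `Ω_n`: an ordered 4-tuple of finite
subsets of `ℕ`. -/
structure Cube where
  A : Finset ℕ
  B : Finset ℕ
  C : Finset ℕ
  D : Finset ℕ
deriving DecidableEq

/-- `σ` is a cube of `Ω_n`: the four parts are pairwise disjoint, their union is
`[n] = {1,…,n}`, and `A`, `C` are nonempty. -/
def IsCube (n : ℕ) (σ : Cube) : Prop :=
  Disjoint σ.A σ.B ∧ Disjoint σ.A σ.C ∧ Disjoint σ.A σ.D ∧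
  Disjoint σ.B σ.C ∧ Disjoint σ.B σ.D ∧ Disjoint σ.C σ.D ∧
  σ.A ∪ σ.B ∪ σ.C ∪ σ.D = Finset.Icc 1 n ∧
  σ.A.Nonempty ∧ σ.C.Nonempty

/-- The dimension of a cube, `|B| + |D|`. -/
def Cube.dim (σ : Cube) : ℕ := σ.B.card + σ.D.card

/-- The pivot `α(σ) = min (A ∪ B)`. -/
noncomputable def Cube.alpha (σ : Cube) : ℕ := sInf (↑(σ.A ∪ σ.B) : Set ℕ)

/-- The pivot `β(σ) = max (B ∪ C)`. -/
noncomputable def Cube.beta (σ : Cube) : ℕ := sSup (↑(σ.B ∪ σ.C) : Set ℕ)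

def M1up (σ : Cube) : Prop := σ.alpha ∈ σ.B
def M1down (σ : Cube) : Prop := σ.alpha ∈ σ.A ∧ 2 ≤ σ.A.card
def M2up (σ : Cube) : Prop := σ.A = {σ.alpha} ∧ σ.beta ∈ σ.B
def M2down (σ : Cube) : Prop :=
  σ.A = {σ.alpha} ∧ σ.beta ∈ σ.C ∧ 2 ≤ σ.C.card ∧ σ.alpha < σ.beta
def Mdown (σ : Cube) : Prop := M1down σ ∨ M2down σ
def Mup (σ : Cube) : Prop := M1up σ ∨ M2up σ
def Critical (σ : Cube) : Prop := ¬ Mdown σ ∧ ¬ Mup σ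

/-- The covering relation: `τ` is obtained from `σ` by moving exactly one element
of `B(σ) ∪ D(σ)` into `A(σ)` or into `C(σ)`. -/
def Covers (σ τ : Cube) : Prop :=
  (∃ x ∈ σ.B, τ = ⟨insert x σ.A, σ.B.erase x, σ.C, σ.D⟩) ∨
  (∃ x ∈ σ.B, τ = ⟨σ.A, σ.B.erase x, insert x σ.C, σ.D⟩) ∨
  (∃ x ∈ σ.D, τ = ⟨insert x σ.A, σ.B, σ.C, σ.D.erase x⟩) ∨
  (∃ x ∈ σ.D, τ = ⟨σ.A, σ.B, insert x σ.C, σ.D.erase x⟩)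

open Classical in
/-- The matching `μ₊ : M↓ → M↑`. -/
noncomputable def muPlus (σ : Cube) : Cube :=
  if M1down σ then ⟨σ.A.erase σ.alpha, insert σ.alpha σ.B, σ.C, σ.D⟩
  else ⟨σ.A, insert σ.beta σ.B, σ.C.erase σ.beta, σ.D⟩

/-- The parametrization of critical cubes by subsets. -/
noncomputable def gg (n : ℕ) (S : Finset ℕ) : Cube :=
  ⟨{sSup (↑S : Set ℕ)}, ∅, S.erase (sSup (↑S : Set ℕ)), Finset.Icc 1 n \ S⟩

lemma card_partition {σ : Cube} {n : ℕ} (h : IsCube n σ) :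
    σ.A.card + σ.B.card + σ.C.card + σ.D.card = n := by
  obtain ⟨hAB, hAC, hAD, hBC, hBD, hCD, hU, hA, hC⟩ := h
  have h1 : Disjoint (σ.A ∪ σ.B) σ.C := by
    rw [Finset.disjoint_union_left]; exact ⟨hAC, hBC⟩
  have h2 : Disjoint (σ.A ∪ σ.B ∪ σ.C) σ.D := by
    rw [Finset.disjoint_union_left, Finset.disjoint_union_left]
    exact ⟨⟨hAD, hBD⟩, hCD⟩
  have e : (σ.A ∪ σ.B ∪ σ.C ∪ σ.D).card
      = σ.A.card + σ.B.card + σ.C.card + σ.D.card := by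
    rw [Finset.card_union_of_disjoint h2, Finset.card_union_of_disjoint h1,
      Finset.card_union_of_disjoint hAB]
  rw [hU, Nat.card_Icc] at e
  omega

lemma gg_spec {n k : ℕ} (hk : 3 ≤ k) {S : Finset ℕ}
    (hsub : S ⊆ Finset.Icc 1 n) (hcard : S.card = k) :
    IsCube n (gg n S) ∧ Critical (gg n S) ∧ (gg n S).dim = n - k := by
  have hS : S.Nonempty := Finset.card_pos.mp (by omega)
  set m := sSup (↑S : Set ℕ) with hm
  have hmmax : m = S.max' hS := hS.csSup_eq_max'
  have hmS : m ∈ S := by rw [hmmax]; exact S.max'_mem hS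
  have hle : ∀ x ∈ S, x ≤ m := by intro x hx; rw [hmmax]; exact S.le_max' x hx
  have hEcard : (S.erase m).card = k - 1 := by
    rw [Finset.card_erase_of_mem hmS, hcard]
  have hENe : (S.erase m).Nonempty := Finset.card_pos.mp (by omega)
  have halpha : (gg n S).alpha = m := by
    simp only [Cube.alpha, gg, Finset.union_empty, Finset.coe_singleton]
    exact csInf_singleton m
  have hbeta : (gg n S).beta = sSup (↑(S.erase m) : Set ℕ) := by
    simp only [Cube.beta, gg, Finset.empty_union]; rfl
  have hbetaS : (gg n S).beta ∈ S.erase m := by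
    rw [hbeta, hENe.csSup_eq_max']; exact (S.erase m).max'_mem hENe
  have hbetalt : (gg n S).beta < m := by
    have h1 := hle _ (Finset.mem_of_mem_erase hbetaS)
    have h2 := Finset.ne_of_mem_erase hbetaS
    omega
  have hSeq : {m} ∪ S.erase m = S := by
    rw [← Finset.insert_eq, Finset.insert_erase hmS]
  refine ⟨⟨?_, ?_, ?_, ?_, ?_, ?_, ?_, ?_, ?_⟩, ⟨?_, ?_⟩, ?_⟩
  · simp [gg]
  · simp [gg]
  · simp only [gg, Finset.disjoint_singleton_left, Finset.mem_sdiff, not_and, not_not]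
    intro _; exact hmS
  · simp [gg]
  · simp [gg]
  · exact Finset.sdiff_disjoint.symm.mono_left (Finset.erase_subset m S)
  · show {m} ∪ ∅ ∪ S.erase m ∪ (Finset.Icc 1 n \ S) = _
    rw [Finset.union_empty, hSeq, Finset.union_sdiff_of_subset hsub]
  · exact ⟨m, Finset.mem_singleton_self m⟩
  · exact hENe
  · rintro (⟨-, h2⟩ | ⟨-, -, -, h4⟩)
    · simp [gg] at h2
    · rw [halpha] at h4; omega
  · rintro (h1 | ⟨-, h2⟩)
    · simp [M1up, gg] at h1
    · simp [gg] at h2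
  · show (∅ : Finset ℕ).card + (Finset.Icc 1 n \ S).card = n - k
    rw [Finset.card_empty, Finset.card_sdiff_of_subset hsub, Nat.card_Icc, hcard]
    omega

lemma critical_struct {n d : ℕ} (hd : d + 3 ≤ n) {σ : Cube}
    (hcube : IsCube n σ) (hcrit : Critical σ) (hdim : σ.dim = d) :
    ∃ S : Finset ℕ, S ⊆ Finset.Icc 1 n ∧ S.card = n - d ∧ σ = gg n S := by
  obtain ⟨hAB, hAC, hAD, hBC, hBD, hCD, hU, hA, hC⟩ := hcube
  obtain ⟨hdown, hup⟩ := hcrit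
  have hABne : ((↑(σ.A ∪ σ.B) : Set ℕ)).Nonempty := by
    rw [Finset.coe_nonempty]; exact hA.mono Finset.subset_union_left
  have hBCne : (σ.B ∪ σ.C).Nonempty := hC.mono Finset.subset_union_right
  have halphamem : σ.alpha ∈ σ.A ∪ σ.B := Nat.sInf_mem hABne
  have halphale : ∀ x ∈ σ.A ∪ σ.B, σ.alpha ≤ x := fun x hx => Nat.sInf_le hx
  have hbetaval : σ.beta = (σ.B ∪ σ.C).max' hBCne := hBCne.csSup_eq_max'
  have hbetamem : σ.beta ∈ σ.B ∪ σ.C := by rw [hbetaval]; exact Finset.max'_mem _ _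
  have hbetage : ∀ x ∈ σ.B ∪ σ.C, x ≤ σ.beta := by
    intro x hx; rw [hbetaval]; exact Finset.le_max' _ x hx
  have hαA : σ.alpha ∈ σ.A := by
    rcases Finset.mem_union.mp halphamem with h | h
    · exact h
    · exact absurd (Or.inl h) hup
  have hAcard : σ.A.card = 1 := by
    have h1 : ¬ (2 ≤ σ.A.card) := fun h => hdown (Or.inl ⟨hαA, h⟩)
    have h2 := Finset.card_pos.mpr hA
    omega
  have hAeq : σ.A = {σ.alpha} := by
    obtain ⟨a, ha⟩ := Finset.card_eq_one.mp hAcard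
    rw [ha] at hαA ⊢
    rw [Finset.mem_singleton.mp hαA]
  have hβC : σ.beta ∈ σ.C := by
    rcases Finset.mem_union.mp hbetamem with h | h
    · exact absurd (Or.inr ⟨hAeq, h⟩) hup
    · exact h
  have hsum := card_partition ⟨hAB, hAC, hAD, hBC, hBD, hCD, hU, hA, hC⟩
  have hdimval : σ.B.card + σ.D.card = d := hdim
  have hC2 : 2 ≤ σ.C.card := by
    have h1 := Finset.card_pos.mpr hC
    omega
  have hβα : σ.beta < σ.alpha := by
    have h1 : ¬ (σ.alpha < σ.beta) := fun h => hdown (Or.inr ⟨hAeq, hβC, hC2, h⟩)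
    have h2 : σ.beta ≠ σ.alpha := fun h =>
      Finset.disjoint_left.mp hAC hαA (h ▸ hβC)
    omega
  have hB : σ.B = ∅ := by
    by_contra hB
    obtain ⟨b, hb⟩ := Finset.nonempty_iff_ne_empty.mpr hB
    have h1 := halphale b (Finset.mem_union_right _ hb)
    have h2 := hbetage b (Finset.mem_union_left _ hb)
    have h3 : b ≠ σ.alpha := fun h => Finset.disjoint_left.mp hAB hαA (h ▸ hb)
    omega
  have hCsub : ∀ c ∈ σ.C, c < σ.alpha := by
    intro c hc
    have h1 := hbetage c (Finset.mem_union_right _ hc)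
    omega
  set S := σ.A ∪ σ.C with hSdef
  have hSsub : S ⊆ Finset.Icc 1 n := by
    rw [← hU]; intro x hx
    rcases Finset.mem_union.mp hx with h | h
    · exact Finset.mem_union_left _ (Finset.mem_union_left _ (Finset.mem_union_left _ h))
    · exact Finset.mem_union_left _ (Finset.mem_union_right _ h)
  have hSne : S.Nonempty := hA.mono Finset.subset_union_left
  have hmax : sSup (↑S : Set ℕ) = σ.alpha := by
    rw [hSne.csSup_eq_max']
    apply le_antisymm
    · rcases Finset.mem_union.mp (S.max'_mem hSne) with h | h
      · rw [hAeq] at h; exact le_of_eq (Finset.mem_singleton.mp h)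
      · exact le_of_lt (hCsub _ h)
    · exact S.le_max' _ (Finset.mem_union_left _ hαA)
  have hScard : S.card = n - d := by
    have h5 : S.card = σ.A.card + σ.C.card := Finset.card_union_of_disjoint hAC
    omega
  refine ⟨S, hSsub, hScard, ?_⟩
  have hαnC : σ.alpha ∉ σ.C := fun h => Finset.disjoint_left.mp hAC hαA h
  have hCeq : S.erase (sSup (↑S : Set ℕ)) = σ.C := by
    rw [hmax, hSdef, hAeq, ← Finset.insert_eq, Finset.erase_insert hαnC]
  have hDeq : Finset.Icc 1 n \ S = σ.D := by
    rw [← hU, hB, Finset.union_empty]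
    have : σ.A ∪ σ.C ∪ σ.D = S ∪ σ.D := rfl
    rw [this, Finset.union_sdiff_cancel_left]
    rw [Finset.disjoint_union_left]; exact ⟨hAD, hCD⟩
  show σ = ⟨{sSup (↑S : Set ℕ)}, ∅, S.erase (sSup (↑S : Set ℕ)), Finset.Icc 1 n \ S⟩
  rw [hCeq, hDeq, hmax, ← hAeq, ← hB]

lemma gg_inj {n k : ℕ} (hk : 3 ≤ k) :
    Set.InjOn (gg n) ↑((Finset.Icc 1 n).powersetCard k) := by
  intro S hS T hT h
  simp only [Finset.mem_coe, Finset.mem_powersetCard] at hS hT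
  have hSne : S.Nonempty := Finset.card_pos.mp (by rw [hS.2]; omega)
  have hTne : T.Nonempty := Finset.card_pos.mp (by rw [hT.2]; omega)
  have hmS : sSup (↑S : Set ℕ) ∈ S := by
    rw [hSne.csSup_eq_max']; exact S.max'_mem hSne
  have hmT : sSup (↑T : Set ℕ) ∈ T := by
    rw [hTne.csSup_eq_max']; exact T.max'_mem hTne
  have h1 : sSup (↑S : Set ℕ) = sSup (↑T : Set ℕ) := by
    have := congrArg Cube.A h
    simpa [gg] using this
  have h3 : S.erase (sSup (↑S : Set ℕ)) = T.erase (sSup (↑T : Set ℕ)) :=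
    congrArg Cube.C h
  have : insert (sSup (↑S : Set ℕ)) (S.erase (sSup (↑S : Set ℕ)))
      = insert (sSup (↑T : Set ℕ)) (T.erase (sSup (↑T : Set ℕ))) := by
    rw [h3, h1]
  rwa [Finset.insert_erase hmS, Finset.insert_erase hmT] at this

/-- For `0 ≤ d ≤ n−3`, the number of critical cubes of `Ω_n` of dimension `d`
equals the binomial coefficient `C(n,d)`. -/
theorem count_critical_low (n d : ℕ) (hn : 2 ≤ n) (hd : d + 3 ≤ n) :
    {σ : Cube | IsCube n σ ∧ Critical σ ∧ σ.dim = d}.ncard = n.choose d := by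
  classical
  have hdn : d ≤ n := by omega
  have hk3 : 3 ≤ n - d := by omega
  have key : {σ : Cube | IsCube n σ ∧ Critical σ ∧ σ.dim = d}
      = ↑(((Finset.Icc 1 n).powersetCard (n - d)).image (gg n)) := by
    ext σ
    simp only [Set.mem_setOf_eq, Finset.coe_image, Set.mem_image, Finset.mem_coe,
      Finset.mem_powersetCard]
    constructor
    · rintro ⟨hcube, hcrit, hdim⟩
      obtain ⟨S, h1, h2, h3⟩ := critical_struct hd hcube hcrit hdim
      exact ⟨S, ⟨h1, h2⟩, h3.symm⟩
    · rintro ⟨S, ⟨h1, h2⟩, rfl⟩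
      obtain ⟨a, b, c⟩ := gg_spec hk3 h1 h2
      refine ⟨a, b, ?_⟩
      rw [c]; omega
  rw [key, Set.ncard_coe_finset, Finset.card_image_of_injOn (gg_inj hk3),
    Finset.card_powersetCard, Nat.card_Icc]
  simp only [Nat.add_sub_cancel]
  exact Nat.choose_symm hdn
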